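/- For the (2j+2)-dimensional irreducible representation πⱼ of su(2) with invariant Hermitian inner product, the map p_j(X) := ((2j+1)(2j+3))^{-1/2} πⱼ(X) equals the Clifford homomorphism obtained from the projection of Wⱼ ⊗ ℂ³ onto its Wⱼ-summand, where the isometric embedding ι: Wⱼ → Wⱼ ⊗ ℂ³ is ι(φ) = -((2j+1)(2j+3))^{-1/2} Σᵢ πⱼ(σᵢ)φ ⊗ eᵢ. Equivalently, ⟨p_j(X)φ, ψ⟩ = ((2j+1)(2j+3))^{-1/2} ⟨πⱼ(X)φ, ψ⟩ for all φ, ψ ∈ Wⱼ and X ∈ ℝ³ ≅ su(2). -/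

import Mathlib

open scoped ComplexInnerProductSpace

/-- In dimension 3, the Clifford homomorphism `p_j(X)φ = Π_j(φ ⊗ X)` obtained from the
orthogonal projection onto the `Wⱼ`-summand of `Wⱼ ⊗ ℂ³` (with the isometric embedding
`ι(φ) = -((2j+1)(2j+3))^{-1/2} Σᵢ πⱼ(σᵢ)φ ⊗ eᵢ`, so that `Π_j = ι*`) coincides with
`((2j+1)(2j+3))^{-1/2} πⱼ(X)`; equivalently
`⟨p_j(X)φ, ψ⟩ = ((2j+1)(2j+3))^{-1/2} ⟨πⱼ(X)φ, ψ⟩` for all `φ, ψ ∈ Wⱼ`, `X ∈ ℝ³ ≅ su(2)`.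
Here `Wⱼ ⊗ ℂ³` is modelled as `PiLp 2 (Fin 3 → Wⱼ)`, `φ ⊗ X` is `fun i => Xᵢ • φ`,
and `A i = πⱼ(σᵢ)`. -/
theorem clifford_hom_eq_scaled_lie_action (j : ℕ) (W : Type*) [NormedAddCommGroup W]
    [InnerProductSpace ℂ W] [FiniteDimensional ℂ W]
    (A : Fin 3 → W →ₗ[ℂ] W)
    (hskew : ∀ i, LinearMap.adjoint (A i) = -A i)
    (hcas : A 0 ∘ₗ A 0 + A 1 ∘ₗ A 1 + A 2 ∘ₗ A 2
      = (-((2 * (j : ℂ) + 1) * (2 * (j : ℂ) + 3))) • LinearMap.id)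
    (ι : W → PiLp 2 fun _ : Fin 3 => W)
    (hι : ∀ φ, ι φ = (WithLp.equiv 2 (∀ _ : Fin 3, W)).symm
      (fun i => (-((Real.sqrt ((2 * (j : ℝ) + 1) * (2 * (j : ℝ) + 3)))⁻¹ : ℝ) : ℂ) • A i φ))
    (Pr : (PiLp 2 fun _ : Fin 3 => W) →ₗ[ℂ] W)    -- the orthogonal projection Π_j
    (hPr : ∀ (v : PiLp 2 fun _ : Fin 3 => W) (ψ : W), ⟪Pr v, ψ⟫ = ⟪v, ι ψ⟫) :
    ∀ (X : Fin 3 → ℝ) (φ ψ : W),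
      ⟪Pr ((WithLp.equiv 2 (∀ _ : Fin 3, W)).symm fun i => ((X i : ℝ) : ℂ) • φ), ψ⟫
        = (((Real.sqrt ((2 * (j : ℝ) + 1) * (2 * (j : ℝ) + 3)))⁻¹ : ℝ) : ℂ)
          * ⟪(∑ i, ((X i : ℝ) : ℂ) • A i) φ, ψ⟫ := by
  intro X φ ψ
  rw [hPr, hι]
  have hadj : ∀ i (x y : W), ⟪x, A i y⟫ = -⟪A i x, y⟫ := by
    intro i x y
    rw [← LinearMap.adjoint_inner_left, hskew]
    simp
  simp only [PiLp.inner_apply, WithLp.equiv_symm_apply, PiLp.toLp_apply, LinearMap.sum_apply,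
    LinearMap.smul_apply, sum_inner, inner_smul_left, inner_smul_right, hadj,
    Complex.conj_ofReal, Finset.mul_sum, map_neg, map_inv₀, map_smul]
  ring_nf
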